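/- arXiv:2212.07227 — 6 statements merged into one kernel-verified Lean document; each statement's English description precedes it below -/
import Mathlib

section
/- For endomorphisms φ₁, φ₂ of finite-dimensional vector spaces V₁, V₂ over a field with φᵢ² = c·Id for a scalar c ≠ 0, the maps φ₁⊗1 − 1⊗φ₂ and φ₁⊗1 + 1⊗φ₂ on V₁⊗V₂ satisfy: the image of each equals the kernel of the other; i.e., the 2-periodic sequence with these alternating maps is exact. -/
open TensorProduct

lemma aux_exact {k W : Type*} [Field k] (hk : (2 : k) ≠ 0)
    [AddCommGroup W] [Module k W]
    (c : k) (hc : c ≠ 0) (A B : W →ₗ[k] W)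
    (hA : A ∘ₗ A = c • LinearMap.id) (hB : B ∘ₗ B = c • LinearMap.id)
    (hcomm : A ∘ₗ B = B ∘ₗ A) :
    LinearMap.range (A - B) = LinearMap.ker (A + B) := by
  have hA' : ∀ x, A (A x) = c • x := fun x => by
    have := congrFun (congrArg DFunLike.coe hA) x; simpa using this
  have hB' : ∀ x, B (B x) = c • x := fun x => by
    have := congrFun (congrArg DFunLike.coe hB) x; simpa using this
  have hc' : ∀ x, A (B x) = B (A x) := fun x => by
    have := congrFun (congrArg DFunLike.coe hcomm) x; simpa using this
  apply le_antisymm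
  · rintro _ ⟨x, rfl⟩
    simp only [LinearMap.mem_ker, LinearMap.sub_apply, LinearMap.add_apply, map_sub, map_add,
      hA' , hB', hc']
    abel
  · intro x hx
    simp only [LinearMap.mem_ker, LinearMap.add_apply] at hx
    have hAB : A x = - B x := by linear_combination (norm := module) hx
    refine ⟨(2 * c)⁻¹ • A x, ?_⟩
    have h2c : (2 * c) ≠ 0 := mul_ne_zero hk hc
    simp only [LinearMap.sub_apply, map_smul, hA']
    rw [hAB, map_neg, hB', sub_neg_eq_add]
    rw [← smul_add, smul_smul, smul_add, ← add_smul,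
      show (2 * c)⁻¹ * c + (2 * c)⁻¹ * c = 1 by field_simp; ring, one_smul]

/-- for endomorphisms `φᵢ` of finite-dimensional vector spaces with
`φᵢ² = c·Id`, `c ≠ 0`, the 2-periodic sequence with alternating maps
`φ₁⊗1 − 1⊗φ₂` and `φ₁⊗1 + 1⊗φ₂` on `V₁ ⊗ V₂` is exact: the image of each map
equals the kernel of the other. -/
theorem stmt_2 {k V₁ V₂ : Type*} [Field k] (hk : (2 : k) ≠ 0)
    [AddCommGroup V₁] [Module k V₁] [FiniteDimensional k V₁]
    [AddCommGroup V₂] [Module k V₂] [FiniteDimensional k V₂]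
    (c : k) (hc : c ≠ 0)
    (φ₁ : V₁ →ₗ[k] V₁) (φ₂ : V₂ →ₗ[k] V₂)
    (h₁ : φ₁ ∘ₗ φ₁ = c • LinearMap.id) (h₂ : φ₂ ∘ₗ φ₂ = c • LinearMap.id) :
    LinearMap.range (TensorProduct.map φ₁ LinearMap.id - TensorProduct.map LinearMap.id φ₂) =
      LinearMap.ker (TensorProduct.map φ₁ LinearMap.id + TensorProduct.map LinearMap.id φ₂) ∧
    LinearMap.range (TensorProduct.map φ₁ LinearMap.id + TensorProduct.map LinearMap.id φ₂) =
      LinearMap.ker (TensorProduct.map φ₁ LinearMap.id - TensorProduct.map LinearMap.id φ₂) := by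
  set A := TensorProduct.map φ₁ (LinearMap.id : V₂ →ₗ[k] V₂) with hAdef
  set B := TensorProduct.map (LinearMap.id : V₁ →ₗ[k] V₁) φ₂ with hBdef
  have hA : A ∘ₗ A = c • LinearMap.id := by
    rw [hAdef, ← TensorProduct.map_comp, h₁]
    ext x y
    simp [TensorProduct.smul_tmul']
  have hB : B ∘ₗ B = c • LinearMap.id := by
    rw [hBdef, ← TensorProduct.map_comp, h₂]
    ext x y
    simp
  have hcomm : A ∘ₗ B = B ∘ₗ A := by
    rw [hAdef, hBdef, ← TensorProduct.map_comp, ← TensorProduct.map_comp]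
    simp
  constructor
  · exact aux_exact hk c hc A B hA hB hcomm
  · have := aux_exact hk c hc A (-B) hA (by simpa using hB) (by
      simp only [LinearMap.comp_neg, LinearMap.neg_comp, hcomm])
    simpa [sub_neg_eq_add, ← sub_eq_add_neg] using this
end

section
/- Let f₁,…,f_{2g+2} be pairwise coprime linear forms in k[s,t] and f_I = ∏_{i∈I} f_i. For I, J ⊆ {1,…,2g+2} with |I| = |J| = g+1, J ∉ {I, I^c}, and i ∈ I∩J, the polynomial f_I is the smallest-degree homogeneous generator of the ideal (f_i) ∩ (f_I, f_{I^c}) in k[s,t]. -/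
open MvPolynomial

namespace Stmt5Aux

variable {k : Type*} [Field k]

lemma degree_add' (u v : Fin 2 →₀ ℕ) : (u + v).degree = u.degree + v.degree := by
  simp [Finsupp.degree_eq_weight_one, map_add]

lemma degree_fin2 (m : Fin 2 →₀ ℕ) : m.degree = m 0 + m 1 := by
  rw [Finsupp.degree, ← Fin.sum_univ_two (fun i => m i)]
  exact Finset.sum_subset (Finset.subset_univ _)
    (fun i _ hi => Finsupp.notMem_support_iff.mp hi)

lemma lin_struct {p : MvPolynomial (Fin 2) k} (hp : p.IsHomogeneous 1) :
    p = C (coeff (Finsupp.single 0 1) p) * X 0 + C (coeff (Finsupp.single 1 1) p) * X 1 := by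
  classical
  ext m
  rw [coeff_add, coeff_C_mul, coeff_C_mul, coeff_X', coeff_X']
  rcases eq_or_ne m (Finsupp.single 0 1) with rfl | h0
  · simp [Finsupp.single_eq_single_iff]
  rcases eq_or_ne m (Finsupp.single 1 1) with rfl | h1
  · simp [Finsupp.single_eq_single_iff]
  rw [if_neg (fun h => h0 h.symm), if_neg (fun h => h1 h.symm), mul_zero, mul_zero, add_zero]
  apply hp.coeff_eq_zero
  rw [degree_fin2]
  intro hdeg
  have hcases : (m 0 = 1 ∧ m 1 = 0) ∨ (m 0 = 0 ∧ m 1 = 1) := by omega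
  rcases hcases with ⟨ha, hb⟩ | ⟨ha, hb⟩
  · exact h0 (Finsupp.ext fun i => by fin_cases i <;> simp [ha, hb, Finsupp.single_apply])
  · exact h1 (Finsupp.ext fun i => by fin_cases i <;> simp [ha, hb, Finsupp.single_apply])

end Stmt5Aux

namespace Stmt5Aux
variable {k : Type*} [Field k]

lemma eval_lin {p : MvPolynomial (Fin 2) k} (hp : p.IsHomogeneous 1) (z : Fin 2 → k) :
    eval z p = coeff (Finsupp.single 0 1) p * z 0 + coeff (Finsupp.single 1 1) p * z 1 := by
  conv_lhs => rw [lin_struct hp]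
  simp

lemma exists_root {p : MvPolynomial (Fin 2) k} (hp : p.IsHomogeneous 1) (h0 : p ≠ 0) :
    ∃ z : Fin 2 → k, (z 0 ≠ 0 ∨ z 1 ≠ 0) ∧ eval z p = 0 := by
  set a := coeff (Finsupp.single 0 1) p with ha
  set b := coeff (Finsupp.single 1 1) p with hb
  have hab : ¬(a = 0 ∧ b = 0) := by
    rintro ⟨rfl0, rfl1⟩
    apply h0
    rw [lin_struct hp, ← ha, ← hb, rfl0, rfl1]
    simp
  refine ⟨![b, -a], ?_, ?_⟩
  · by_contra h
    push_neg at h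
    exact hab ⟨by simpa using h.2, by simpa using h.1⟩
  · rw [eval_lin hp, ← ha, ← hb]
    simp
    ring

lemma prop_lemma {a b a' b' z0 z1 : k} (hz : z0 ≠ 0 ∨ z1 ≠ 0)
    (hab : ¬(a = 0 ∧ b = 0)) (h1 : a * z0 + b * z1 = 0) (h2 : a' * z0 + b' * z1 = 0) :
    ∃ c, a' = c * a ∧ b' = c * b := by
  have hdet : a * b' - a' * b = 0 := by
    have k0 : (a * b' - a' * b) * z0 = 0 := by linear_combination b' * h1 - b * h2
    have k1 : (a * b' - a' * b) * z1 = 0 := by linear_combination (-a') * h1 + a * h2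
    rcases hz with hz | hz
    · exact (mul_eq_zero.mp k0).resolve_right hz
    · exact (mul_eq_zero.mp k1).resolve_right hz
  rcases eq_or_ne a 0 with rfl | ha
  · have hbne : b ≠ 0 := fun h => hab ⟨rfl, h⟩
    have ha' : a' = 0 := by
      have hz2 : a' * b = 0 := by linear_combination -hdet
      exact (mul_eq_zero.mp hz2).resolve_right hbne
    exact ⟨b' / b, by simp [ha'], by field_simp⟩
  · refine ⟨a' / a, by field_simp, ?_⟩
    field_simp
    linear_combination hdet

lemma vanish_imp_smul {p q : MvPolynomial (Fin 2) k} (hp : p.IsHomogeneous 1) (hp0 : p ≠ 0)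
    (hq : q.IsHomogeneous 1) {z : Fin 2 → k} (hz : z 0 ≠ 0 ∨ z 1 ≠ 0)
    (hzp : eval z p = 0) (hzq : eval z q = 0) : ∃ c : k, q = c • p := by
  set a := coeff (Finsupp.single 0 1) p with ha
  set b := coeff (Finsupp.single 1 1) p with hb
  have hab : ¬(a = 0 ∧ b = 0) := by
    rintro ⟨rfl0, rfl1⟩
    apply hp0
    rw [lin_struct hp, ← ha, ← hb, rfl0, rfl1]; simp
  rw [eval_lin hp] at hzp
  rw [eval_lin hq] at hzq
  obtain ⟨c, hc1, hc2⟩ := prop_lemma hz hab hzp hzq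
  refine ⟨c, ?_⟩
  rw [lin_struct hq, hc1, hc2, smul_eq_C_mul, lin_struct hp (p := p), ← ha, ← hb]
  push_cast [map_mul]
  ring

lemma hc_lt {x q : MvPolynomial (Fin 2) k} {n d : ℕ} (hq : q.IsHomogeneous n) (hd : d < n) :
    homogeneousComponent d (x * q) = 0 := by
  classical
  ext m
  rw [coeff_homogeneousComponent, coeff_zero]
  split_ifs with h
  · rw [coeff_mul]
    apply Finset.sum_eq_zero
    rintro ⟨u, v⟩ huv
    have huv' : u + v = m := Finset.HasAntidiagonal.mem_antidiagonal.mp huv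
    have hv : v.degree ≠ n := by
      have : u.degree + v.degree = d := by rw [← degree_add', huv', h]
      omega
    rw [hq.coeff_eq_zero hv, mul_zero]
  · rfl

lemma hc_eq {x q : MvPolynomial (Fin 2) k} {n : ℕ} (hq : q.IsHomogeneous n) :
    homogeneousComponent n (x * q) = C (coeff 0 x) * q := by
  classical
  ext m
  rw [coeff_homogeneousComponent, coeff_C_mul]
  split_ifs with h
  · rw [coeff_mul]
    refine Finset.sum_eq_single (0, m) ?_ ?_
    · rintro ⟨u, v⟩ huv hne
      have huv' : u + v = m := Finset.HasAntidiagonal.mem_antidiagonal.mp huv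
      have hu : u ≠ 0 := by
        rintro rfl
        have hv' : v = m := by simpa using huv'
        exact hne (by rw [hv'])
      have hudeg : u.degree ≠ 0 := fun h0 => hu ((Finsupp.degree_eq_zero_iff u).mp h0)
      have hv : v.degree ≠ n := by
        have : u.degree + v.degree = n := by rw [← degree_add', huv', h]
        omega
      rw [hq.coeff_eq_zero hv, mul_zero]
    · intro hnotmem
      exact absurd (Finset.HasAntidiagonal.mem_antidiagonal.mpr (zero_add m)) hnotmem
  · rw [hq.coeff_eq_zero h, mul_zero]

end Stmt5Aux


open Stmt5Aux in
/-- for pairwise coprime linear forms `f₁,…,f_{2g+2}`, subsets `I, J` with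
`|I| = |J| = g+1`, `J ∉ {I, I^c}`, and `i ∈ I ∩ J`, the polynomial `f_I` is the
smallest-degree homogeneous generator of `(f_i) ∩ (f_I, f_{I^c})`: it lies in that ideal,
every nonzero homogeneous element of the ideal has degree ≥ g+1, and every homogeneous
element of degree g+1 is a scalar multiple of `f_I`. -/
theorem stmt_5 {k : Type*} [Field k] [IsAlgClosed k] (g : ℕ)
    (f : Fin (2 * g + 2) → MvPolynomial (Fin 2) k)
    (hlin : ∀ i, (f i).IsHomogeneous 1) (hne : ∀ i, f i ≠ 0)
    (hcop : ∀ i j, i ≠ j → ∀ c : k, f j ≠ c • f i)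
    (I J : Finset (Fin (2 * g + 2))) (hI : I.card = g + 1) (hJ : J.card = g + 1)
    (hJne : J ≠ I) (hJnec : J ≠ Iᶜ) (i : Fin (2 * g + 2)) (hi : i ∈ I ∩ J) :
    (∏ j ∈ I, f j) ∈
      Ideal.span {f i} ⊓ Ideal.span ({∏ j ∈ I, f j, ∏ j ∈ Iᶜ, f j} : Set (MvPolynomial (Fin 2) k)) ∧
    (∀ p ∈ Ideal.span {f i} ⊓
        Ideal.span ({∏ j ∈ I, f j, ∏ j ∈ Iᶜ, f j} : Set (MvPolynomial (Fin 2) k)),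
      p ≠ 0 → ∀ d, MvPolynomial.IsHomogeneous p d → g + 1 ≤ d) ∧
    (∀ p ∈ Ideal.span {f i} ⊓
        Ideal.span ({∏ j ∈ I, f j, ∏ j ∈ Iᶜ, f j} : Set (MvPolynomial (Fin 2) k)),
      MvPolynomial.IsHomogeneous p (g + 1) → ∃ c : k, p = c • (∏ j ∈ I, f j)) := by
  classical
  obtain ⟨hiI, hiJ⟩ := Finset.mem_inter.mp hi
  have hP : (∏ j ∈ I, f j).IsHomogeneous (g + 1) := by
    have h := MvPolynomial.IsHomogeneous.prod I f (fun _ => 1) (fun j _ => hlin j)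
    simpa [hI] using h
  have hIc : Iᶜ.card = g + 1 := by
    have h := Finset.card_compl I
    rw [hI, Fintype.card_fin] at h
    omega
  have hQ : (∏ j ∈ Iᶜ, f j).IsHomogeneous (g + 1) := by
    have h := MvPolynomial.IsHomogeneous.prod Iᶜ f (fun _ => 1) (fun j _ => hlin j)
    simpa [hIc] using h
  refine ⟨?_, ?_, ?_⟩
  · exact Ideal.mem_inf.mpr ⟨Ideal.mem_span_singleton.mpr (Finset.dvd_prod_of_mem f hiI),
      Ideal.subset_span (by simp)⟩
  · rintro p hp hp0 d hd
    by_contra hlt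
    push_neg at hlt
    obtain ⟨x, y, hxy⟩ := Ideal.mem_span_pair.mp (Ideal.mem_inf.mp hp).2
    have hpd : homogeneousComponent d p = p := by
      rw [homogeneousComponent_of_mem ((mem_homogeneousSubmodule _ _).mpr hd), if_pos rfl]
    apply hp0
    rw [← hpd, ← hxy, map_add, hc_lt hP hlt, hc_lt hQ hlt, add_zero]
  · rintro p hp hpd
    obtain ⟨x, y, hxy⟩ := Ideal.mem_span_pair.mp (Ideal.mem_inf.mp hp).2
    have hpd' : homogeneousComponent (g + 1) p = p := by
      rw [homogeneousComponent_of_mem ((mem_homogeneousSubmodule _ _).mpr hpd), if_pos rfl]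
    have hdec : p = C (coeff 0 x) * (∏ j ∈ I, f j) + C (coeff 0 y) * (∏ j ∈ Iᶜ, f j) := by
      rw [← hpd', ← hxy, map_add, hc_eq hP, hc_eq hQ]
    obtain ⟨z, hz, hz0⟩ := exists_root (hlin i) (hne i)
    have hPz : eval z (∏ j ∈ I, f j) = 0 := by
      obtain ⟨r, hr⟩ := Finset.dvd_prod_of_mem f hiI
      rw [hr, map_mul, hz0, zero_mul]
    have hQz : eval z (∏ j ∈ Iᶜ, f j) ≠ 0 := by
      rw [map_prod]
      refine Finset.prod_ne_zero_iff.mpr fun j hj h0 => ?_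
      have hji : j ≠ i := fun h => (Finset.mem_compl.mp hj) (h ▸ hiI)
      obtain ⟨c, hc⟩ := vanish_imp_smul (hlin i) (hne i) (hlin j) hz hz0 h0
      exact hcop i j (Ne.symm hji) c hc
    have hpz : eval z p = 0 := by
      obtain ⟨r, hr⟩ := Ideal.mem_span_singleton.mp (Ideal.mem_inf.mp hp).1
      rw [hr, map_mul, hz0, zero_mul]
    have hy0 : coeff 0 y = 0 := by
      rw [hdec] at hpz
      simp only [map_add, map_mul, eval_C, hPz, mul_zero, zero_add] at hpz
      exact (mul_eq_zero.mp hpz).resolve_right hQz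
    refine ⟨coeff 0 x, ?_⟩
    rw [hdec, hy0, map_zero, zero_mul, add_zero, smul_eq_C_mul]
end

section
/- Let ι: E → E be the hyperelliptic involution, and let vector bundle B on ℙ¹ with map φ: B → B(g+1), φ² = f, define the bundle L on E. Then the bundle defined by −φ is ι*L. -/
set_option synthInstance.maxHeartbeats 1000000
set_option maxHeartbeats 1000000

noncomputable section
open Polynomial

/-- The coordinate ring `R_E = k[s,t][y]/(y² − f)` of the hyperelliptic curve `E`. -/
abbrev hyperellRing {k : Type*} [Field k] (f : MvPolynomial (Fin 2) k) :=
  Polynomial (MvPolynomial (Fin 2) k) ⧸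
    Ideal.span {(X : Polynomial (MvPolynomial (Fin 2) k)) ^ 2 - C f}

/-- The `R_E`-module `coker(y·Id − ψ)`, i.e. the module of the bundle `L` defined by the
matrix factorization `ψ`. -/
abbrev cokerYminus {k : Type*} [Field k] (f : MvPolynomial (Fin 2) k) {m : ℕ}
    (ψ : Matrix (Fin m) (Fin m) (MvPolynomial (Fin 2) k)) :=
  (Fin m → hyperellRing f) ⧸
    (LinearMap.range (Matrix.toLin'
      ((Ideal.Quotient.mk _ (X : Polynomial (MvPolynomial (Fin 2) k)) : hyperellRing f) •
          (1 : Matrix (Fin m) (Fin m) (hyperellRing f)) -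
        ψ.map fun a => (Ideal.Quotient.mk _ (C a : Polynomial (MvPolynomial (Fin 2) k))))) :
      Submodule (hyperellRing f) (Fin m → hyperellRing f))

namespace Stmt12Aux

variable {k : Type*} [Field k]

/-- The involution `y ↦ -y` on `A[X]` as a ring hom. -/
def tauHom (k : Type*) [Field k] :
    Polynomial (MvPolynomial (Fin 2) k) →+* Polynomial (MvPolynomial (Fin 2) k) :=
  (aeval (-X : Polynomial (MvPolynomial (Fin 2) k)) :
    Polynomial (MvPolynomial (Fin 2) k) →ₐ[MvPolynomial (Fin 2) k]
      Polynomial (MvPolynomial (Fin 2) k)).toRingHom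

@[simp] lemma tauHom_X : tauHom k (X : Polynomial (MvPolynomial (Fin 2) k)) = -X := by
  simp [tauHom]

@[simp] lemma tauHom_C (a : MvPolynomial (Fin 2) k) :
    tauHom k (C a : Polynomial (MvPolynomial (Fin 2) k)) = C a := by
  simp [tauHom, Polynomial.algebraMap_eq]

lemma tauHom_invol : (tauHom k).comp (tauHom k) = RingHom.id _ := by
  apply Polynomial.ringHom_ext
  · intro a; simp
  · simp

/-- The involution `y ↦ -y` on `A[X]` as a ring equiv. -/
def tauEquiv (k : Type*) [Field k] :
    Polynomial (MvPolynomial (Fin 2) k) ≃+* Polynomial (MvPolynomial (Fin 2) k) :=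
  RingEquiv.ofRingHom (tauHom k) (tauHom k) tauHom_invol tauHom_invol

@[simp] lemma tauEquiv_apply (p : Polynomial (MvPolynomial (Fin 2) k)) :
    tauEquiv k p = tauHom k p := rfl

lemma ideal_map_tau (f : MvPolynomial (Fin 2) k) :
    Ideal.span {(X : Polynomial (MvPolynomial (Fin 2) k)) ^ 2 - C f} =
      (Ideal.span {(X : Polynomial (MvPolynomial (Fin 2) k)) ^ 2 - C f}).map
        (tauEquiv k : Polynomial (MvPolynomial (Fin 2) k) →+* _) := by
  rw [Ideal.map_span, Set.image_singleton]
  have : (tauEquiv k : Polynomial (MvPolynomial (Fin 2) k) →+* _)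
      ((X : Polynomial (MvPolynomial (Fin 2) k)) ^ 2 - C f) = X ^ 2 - C f := by
    show tauHom k ((X : Polynomial (MvPolynomial (Fin 2) k)) ^ 2 - C f) = _
    rw [map_sub, map_pow, tauHom_X, tauHom_C]
    ring_nf
  rw [this]

/-- The hyperelliptic involution on `R_E`. -/
def sigma (f : MvPolynomial (Fin 2) k) : hyperellRing f ≃+* hyperellRing f :=
  Ideal.quotientEquiv _ _ (tauEquiv k) (ideal_map_tau f)

lemma sigma_mk (f : MvPolynomial (Fin 2) k) (p : Polynomial (MvPolynomial (Fin 2) k)) :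
    sigma f (Ideal.Quotient.mk _ p) = Ideal.Quotient.mk _ (tauHom k p) :=
  Ideal.quotientEquiv_mk _ _ _ _ p

@[simp] lemma sigma_X (f : MvPolynomial (Fin 2) k) :
    sigma f (Ideal.Quotient.mk _ (X : Polynomial (MvPolynomial (Fin 2) k))) =
      -(Ideal.Quotient.mk _ (X : Polynomial (MvPolynomial (Fin 2) k))) := by
  rw [sigma_mk, tauHom_X, map_neg]

@[simp] lemma sigma_C (f : MvPolynomial (Fin 2) k) (a : MvPolynomial (Fin 2) k) :
    sigma f (Ideal.Quotient.mk _ (C a : Polynomial (MvPolynomial (Fin 2) k))) =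
      Ideal.Quotient.mk _ (C a : Polynomial (MvPolynomial (Fin 2) k)) := by
  rw [sigma_mk, tauHom_C]

@[simp] lemma sigma_symm_X (f : MvPolynomial (Fin 2) k) :
    (sigma f).symm (Ideal.Quotient.mk _ (X : Polynomial (MvPolynomial (Fin 2) k))) =
      -(Ideal.Quotient.mk _ (X : Polynomial (MvPolynomial (Fin 2) k))) := by
  have := congrArg (sigma f).symm (sigma_X f)
  rw [RingEquiv.symm_apply_apply, map_neg] at this
  rw [← neg_eq_iff_eq_neg] at this
  rw [← this]

@[simp] lemma sigma_symm_C (f : MvPolynomial (Fin 2) k) (a : MvPolynomial (Fin 2) k) :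
    (sigma f).symm (Ideal.Quotient.mk _ (C a : Polynomial (MvPolynomial (Fin 2) k))) =
      Ideal.Quotient.mk _ (C a : Polynomial (MvPolynomial (Fin 2) k)) := by
  have := congrArg (sigma f).symm (sigma_C f a)
  rw [RingEquiv.symm_apply_apply] at this
  exact this.symm

end Stmt12Aux

/-- if the matrix factorization `φ` (with `φ² = f·Id`) defines the bundle
`L = coker(y−φ)` on `E`, then the bundle defined by `−φ` is `ι*L`, where `ι : E → E`
is the hyperelliptic involution `y ↦ −y`.  Algebraically: there is a ring automorphism
`σ` of `R_E` fixing `k[s,t]` and sending `y` to `−y`, and a `σ`-semilinear isomorphism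
`coker(y+φ) ≅ coker(y−φ)`. -/
theorem stmt_12 {k : Type*} [Field k] (g m : ℕ) (f : MvPolynomial (Fin 2) k)
    (hf : f.IsHomogeneous (2 * g + 2)) (hsf : Squarefree f)
    (φ : Matrix (Fin m) (Fin m) (MvPolynomial (Fin 2) k))
    (hφ : φ * φ = f • (1 : Matrix (Fin m) (Fin m) (MvPolynomial (Fin 2) k))) :
    ∃ σ : hyperellRing f ≃+* hyperellRing f,
      σ (Ideal.Quotient.mk _ (X : Polynomial (MvPolynomial (Fin 2) k))) =
        -(Ideal.Quotient.mk _ (X : Polynomial (MvPolynomial (Fin 2) k))) ∧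
      (∀ a : MvPolynomial (Fin 2) k,
        σ (Ideal.Quotient.mk _ (C a : Polynomial (MvPolynomial (Fin 2) k))) =
          Ideal.Quotient.mk _ (C a : Polynomial (MvPolynomial (Fin 2) k))) ∧
      ∃ ψ : cokerYminus f (-φ) ≃+ cokerYminus f φ,
        ∀ (r : hyperellRing f) (x : cokerYminus f (-φ)), ψ (r • x) = σ r • ψ x := by
  classical
  let σ := Stmt12Aux.sigma f
  refine ⟨σ, Stmt12Aux.sigma_X f, Stmt12Aux.sigma_C f, ?_⟩
  let Q := hyperellRing f
  let y : Q := Ideal.Quotient.mk _ (X : Polynomial (MvPolynomial (Fin 2) k))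
  let c : MvPolynomial (Fin 2) k → Q := fun a =>
    Ideal.Quotient.mk _ (C a : Polynomial (MvPolynomial (Fin 2) k))
  let Mneg : Matrix (Fin m) (Fin m) Q := y • 1 - (-φ).map c
  let Mpos : Matrix (Fin m) (Fin m) Q := y • 1 - φ.map c
  have hentry : ∀ i j, σ (Mneg i j) = -(Mpos i j) := by
    intro i j
    simp only [Mneg, Mpos, Matrix.sub_apply, Matrix.smul_apply, Matrix.map_apply,
      Matrix.neg_apply, Matrix.one_apply, smul_eq_mul]
    have h1 : σ y = -y := Stmt12Aux.sigma_X f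
    have h2 : ∀ a, σ (c a) = c a := fun a => Stmt12Aux.sigma_C f a
    have h3 : c (-φ i j) = -(c (φ i j)) := by simp only [c, map_neg]
    rw [map_sub, map_mul, h3, map_neg, h2, h1]
    by_cases h : i = j <;> simp [h] <;> ring
  have hentry' : ∀ i j, σ.symm (Mpos i j) = -(Mneg i j) := by
    intro i j
    have := congrArg σ.symm (hentry i j)
    rw [RingEquiv.symm_apply_apply, map_neg] at this
    rw [← neg_eq_iff_eq_neg] at this
    rw [← this]
  let e : (Fin m → Q) →ₛₗ[(σ : Q →+* Q)] (Fin m → Q) :=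
    { toFun := fun v i => σ (v i)
      map_add' := fun v w => funext fun i => by simp
      map_smul' := fun r v => funext fun i => by
        show σ ((r • v) i) = σ r * σ (v i)
        rw [Pi.smul_apply, smul_eq_mul, map_mul] }
  let e' : (Fin m → Q) →ₛₗ[(σ.symm : Q →+* Q)] (Fin m → Q) :=
    { toFun := fun v i => σ.symm (v i)
      map_add' := fun v w => funext fun i => by simp
      map_smul' := fun r v => funext fun i => by
        show σ.symm ((r • v) i) = σ.symm r * σ.symm (v i)
        rw [Pi.smul_apply, smul_eq_mul, map_mul] }
  let Nneg : Submodule Q (Fin m → Q) := LinearMap.range (Matrix.toLin' Mneg)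
  let Npos : Submodule Q (Fin m → Q) := LinearMap.range (Matrix.toLin' Mpos)
  have hle : Nneg ≤ Npos.comap e := by
    rintro x ⟨v, rfl⟩
    refine ⟨fun j => -(σ (v j)), ?_⟩
    funext i
    simp only [Matrix.toLin'_apply, Matrix.mulVec, dotProduct, e, LinearMap.coe_mk,
      AddHom.coe_mk, map_sum, map_mul]
    refine Finset.sum_congr rfl fun j _ => ?_
    rw [hentry i j]
    ring
  have hle' : Npos ≤ Nneg.comap e' := by
    rintro x ⟨v, rfl⟩
    refine ⟨fun j => -(σ.symm (v j)), ?_⟩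
    funext i
    simp only [Matrix.toLin'_apply, Matrix.mulVec, dotProduct, e', LinearMap.coe_mk,
      AddHom.coe_mk, map_sum, map_mul]
    refine Finset.sum_congr rfl fun j _ => ?_
    rw [hentry' i j]
    ring
  let F : cokerYminus f (-φ) →ₛₗ[(σ : Q →+* Q)] cokerYminus f φ :=
    Submodule.mapQ Nneg Npos e hle
  let G : cokerYminus f φ →ₛₗ[(σ.symm : Q →+* Q)] cokerYminus f (-φ) :=
    Submodule.mapQ Npos Nneg e' hle'
  have hGF : ∀ x, G (F x) = x := by
    intro x
    obtain ⟨v, rfl⟩ := Submodule.Quotient.mk_surjective _ x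
    show G (F (Submodule.Quotient.mk v)) = Submodule.Quotient.mk v
    rw [show F (Submodule.Quotient.mk v) = Submodule.Quotient.mk (e v) from rfl]
    rw [show G (Submodule.Quotient.mk (e v)) = Submodule.Quotient.mk (e' (e v)) from rfl]
    congr 1
    funext i
    simp [e, e']
  have hFG : ∀ x, F (G x) = x := by
    intro x
    obtain ⟨v, rfl⟩ := Submodule.Quotient.mk_surjective _ x
    show F (G (Submodule.Quotient.mk v)) = Submodule.Quotient.mk v
    rw [show G (Submodule.Quotient.mk v) = Submodule.Quotient.mk (e' v) from rfl]
    rw [show F (Submodule.Quotient.mk (e' v)) = Submodule.Quotient.mk (e (e' v)) from rfl]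
    congr 1
    funext i
    simp [e, e']
  refine ⟨{ toFun := F, invFun := G, left_inv := hGF, right_inv := hFG,
            map_add' := map_add F }, ?_⟩
  intro r x
  show F (r • x) = σ r • F x
  exact map_smulₛₗ F r x
end
end

section
/- Let X ⊂ ℙ^{2g+1} be a smooth complete intersection of two quadrics with associated hyperelliptic curve E of genus g, and F_U the Morita bundle of rank 2^g and degree g·2^{g−1} on E. For a vector bundle G on E of rank r and degree d, χ(G ⊗ F_U) = d·2^g + r·g·2^{g−1} + r·2^g(1−g). Consequently, if χ(G⊗F_U) = 0 then r·g ≡ 0 (mod 2); in particular, Ulrich bundles of rank r·2^{g−2} on X do not exist when r·g is odd. -/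
/-- for a vector bundle `G` of rank `r` and degree `d` on the
hyperelliptic curve `E` of genus `g`, by Riemann–Roch
`χ(G ⊗ F_U) = deg(G ⊗ F_U) + rank(G ⊗ F_U)·(1−g)
           = d·2^g + r·g·2^(g−1) + r·2^g·(1−g)`.
If this Euler characteristic vanishes (as it does for the bundle corresponding to
an Ulrich bundle of rank `r·2^(g−2)`), then `r·g` is even; hence Ulrich bundles of
rank `r·2^(g−2)` do not exist when `r·g` is odd. -/
theorem stmt_13 (g : ℕ) (hg : 1 ≤ g) (r d : ℤ)
    (hchi : d * 2 ^ g + r * (g : ℤ) * 2 ^ (g - 1) + r * 2 ^ g * (1 - (g : ℤ)) = 0) :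
    2 ∣ r * (g : ℤ) := by
  obtain ⟨m, rfl⟩ := Nat.exists_eq_add_of_le hg
  simp only [Nat.add_sub_cancel_left, pow_add, pow_one] at hchi
  push_cast at hchi ⊢
  have h2 : (2:ℤ) ^ m ≠ 0 := by positivity
  have key : (2:ℤ) ^ m * (2 * d + r * (1 + m) + 2 * r * (1 - (1 + (m:ℤ)))) = 0 := by
    linear_combination hchi
  rcases mul_eq_zero.mp key with h | h
  · exact absurd h h2
  · exact ⟨-d - r * (1 - (1 + (m:ℤ))), by linear_combination h⟩
end

section
/- Let F_U = ⊕ᵢ (Λ^{2i}U^⊥)* ⊗ T(−i) over T = k[s,t] for a g-dimensional isotropic subspace U of a (2g+2)-dimensional space. The corresponding bundle F_U on the hyperelliptic curve E has rank 2^g, its pushforward to ℙ¹ has degree −Σ_{i≥0} i·binom(g+2,2i) = −(g+2)·2^{g−1}, and therefore deg F_U = (g+1)·2^g − (g+2)·2^{g−1} = g·2^{g−1}. -/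
open Finset

private lemma sum_pair (f : ℕ → ℤ) : ∀ m : ℕ,
    ∑ k ∈ range (2 * m), f k = ∑ i ∈ range m, (f (2 * i) + f (2 * i + 1)) := by
  intro m
  induction m with
  | zero => simp
  | succ m ih =>
    have h2 : 2 * (m + 1) = (2 * m + 1) + 1 := by ring
    rw [h2, sum_range_succ, sum_range_succ, ih, sum_range_succ]
    ring

private lemma ext_sum (n N : ℕ) (hN : n < N) (f : ℕ → ℤ) :
    ∑ k ∈ range N, f k * (Nat.choose n k : ℤ) =
      ∑ k ∈ range (n + 1), f k * (Nat.choose n k : ℤ) := by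
  symm
  apply Finset.sum_subset
  · exact Finset.range_subset_range.2 hN
  · intro x _ hx
    have : n < x := by simpa using hx
    simp [Nat.choose_eq_zero_of_lt this]

/-- the Morita bundle `F_U = ⊕ᵢ (Λ^{2i}U^⊥)* ⊗ T(−i)` has rank
`(Σᵢ binom(g+2,2i))/2 = 2^(g+1)/2 = 2^g` on `E`, its pushforward to `ℙ¹` has degree
`−Σᵢ i·binom(g+2,2i) = −(g+2)·2^(g−1)`, and hence
`deg F_U = (g+1)·2^g − (g+2)·2^(g−1) = g·2^(g−1)`. -/
theorem stmt_14 (g : ℕ) (hg : 1 ≤ g) :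
    (∑ i ∈ Finset.range (g + 3), Nat.choose (g + 2) (2 * i)) = 2 ^ (g + 1) ∧
    (∑ i ∈ Finset.range (g + 3), (i : ℤ) * Nat.choose (g + 2) (2 * i)) =
      ((g : ℤ) + 2) * 2 ^ (g - 1) ∧
    ((g : ℤ) + 1) * 2 ^ g - ((g : ℤ) + 2) * 2 ^ (g - 1) = (g : ℤ) * 2 ^ (g - 1) := by
  have hsum : ∀ n : ℕ, ∑ k ∈ range (n + 1), ((Nat.choose n k : ℤ)) = 2 ^ n := by
    intro n
    have := Nat.sum_range_choose n
    exact_mod_cast congrArg (Nat.cast : ℕ → ℤ) this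
  -- part 1
  have h1 : (∑ i ∈ Finset.range (g + 3), Nat.choose (g + 2) (2 * i)) = 2 ^ (g + 1) := by
    have key : (∑ i ∈ range (g + 3), ((Nat.choose (g + 2) (2 * i)) : ℤ)) = 2 ^ (g + 1) := by
      set n := g + 2 with hn
      set m := g + 3 with hm
      set S := ∑ i ∈ range m, ((Nat.choose n (2 * i)) : ℤ) with hS
      set O := ∑ i ∈ range m, ((Nat.choose n (2 * i + 1)) : ℤ) with hO
      have hSO : S + O = 2 ^ n := by
        rw [hS, hO, ← Finset.sum_add_distrib, ← sum_pair (fun k => (Nat.choose n k : ℤ)) m]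
        have := ext_sum n (2 * m) (by omega) (fun _ => 1)
        simp only [one_mul] at this
        rw [this, hsum]
      have hSO2 : S - O = 0 := by
        have halt : ∑ k ∈ range (n + 1), (-1 : ℤ) ^ k * Nat.choose n k = 0 :=
          Int.alternating_sum_range_choose_of_ne (by omega)
        have := ext_sum n (2 * m) (by omega) (fun k => (-1 : ℤ) ^ k)
        rw [halt] at this
        rw [hS, hO, ← Finset.sum_sub_distrib]
        rw [← this, sum_pair (fun k => (-1 : ℤ) ^ k * Nat.choose n k) m]
        apply Finset.sum_congr rfl
        intro i _
        have e1 : (-1 : ℤ) ^ (2 * i) = 1 := by simp [pow_mul]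
        have e2 : (-1 : ℤ) ^ (2 * i + 1) = -1 := by simp [pow_mul, pow_succ]
        rw [e1, e2]; ring
      have : 2 * S = 2 ^ n := by
        have : S + S = 2 ^ n := by
          have := hSO2
          linarith [hSO, hSO2]
        linarith
      have hpow : (2 : ℤ) ^ n = 2 * 2 ^ (g + 1) := by
        rw [hn, pow_succ]; ring
      have : S = 2 ^ (g + 1) := by
        rw [hpow] at this
        linarith
      exact this
    exact_mod_cast key
  refine ⟨h1, ?_, ?_⟩
  -- part 2
  · set n := g + 2 with hn
    set m := g + 3 with hm
    set T := ∑ i ∈ range m, (i : ℤ) * Nat.choose n (2 * i) with hT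
    set V := ∑ k ∈ range (2 * m), (k : ℤ) * Nat.choose n k with hV
    set W := ∑ k ∈ range (2 * m), (-1 : ℤ) ^ k * k * Nat.choose n k with hW
    have hshift : ∀ f : ℕ → ℤ,
        ∑ k ∈ range (2 * m), f k * k * Nat.choose n k
          = ∑ k ∈ range (2 * m - 1), f (k + 1) * (k + 1) * Nat.choose n (k + 1) := by
      intro f
      have h2m : 2 * m = (2 * m - 1) + 1 := by omega
      rw [h2m, Finset.sum_range_succ']
      simp
    have hmul : ∀ k : ℕ, ((k : ℤ) + 1) * Nat.choose n (k + 1) = (n : ℤ) * Nat.choose (g + 1) k := by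
      intro k
      have := Nat.add_one_mul_choose_eq (g + 1) k
      have hcast : ((g + 1 + 1 : ℕ) : ℤ) * Nat.choose (g + 1) k
          = (Nat.choose (g + 2) (k + 1) : ℤ) * ((k : ℤ) + 1) := by
        exact_mod_cast congrArg (Nat.cast : ℕ → ℤ) this
      push_cast at hcast ⊢
      rw [hn]; push_cast; linarith [hcast]
    have hVval : V = (n : ℤ) * 2 ^ (g + 1) := by
      rw [hV]
      have := hshift (fun _ => 1)
      simp only [one_mul] at this
      rw [this]
      have : ∑ k ∈ range (2 * m - 1), ((k : ℤ) + 1) * Nat.choose n (k + 1)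
          = ∑ k ∈ range (2 * m - 1), (n : ℤ) * Nat.choose (g + 1) k := by
        exact Finset.sum_congr rfl fun k _ => hmul k
      rw [this, ← Finset.mul_sum]
      have := ext_sum (g + 1) (2 * m - 1) (by omega) (fun _ => 1)
      simp only [one_mul] at this
      rw [this, hsum]
    have hWval : W = 0 := by
      rw [hW]
      have := hshift (fun k => (-1 : ℤ) ^ k)
      rw [this]
      have : ∑ k ∈ range (2 * m - 1), (-1 : ℤ) ^ (k + 1) * ((k : ℤ) + 1) * Nat.choose n (k + 1)
          = ∑ k ∈ range (2 * m - 1), (-(n : ℤ)) * ((-1 : ℤ) ^ k * Nat.choose (g + 1) k) := by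
        apply Finset.sum_congr rfl
        intro k _
        have := hmul k
        rw [pow_succ]
        linear_combination (-(-1 : ℤ) ^ k) * hmul k
      push_cast at this ⊢
      rw [this, ← Finset.mul_sum]
      have hext := ext_sum (g + 1) (2 * m - 1) (by omega) (fun k => (-1 : ℤ) ^ k)
      have halt : ∑ k ∈ range (g + 1 + 1), (-1 : ℤ) ^ k * Nat.choose (g + 1) k = 0 :=
        Int.alternating_sum_range_choose_of_ne (by omega)
      rw [hext, halt, mul_zero]
    have h4T : 4 * T = V + W := by
      rw [hT, hV, hW, ← Finset.sum_add_distrib,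
        sum_pair (fun k => (k : ℤ) * Nat.choose n k + (-1 : ℤ) ^ k * k * Nat.choose n k) m,
        Finset.mul_sum]
      apply Finset.sum_congr rfl
      intro i _
      have e1 : (-1 : ℤ) ^ (2 * i) = 1 := by simp [pow_mul]
      have e2 : (-1 : ℤ) ^ (2 * i + 1) = -1 := by simp [pow_mul, pow_succ]
      rw [e1, e2]
      push_cast
      ring
    have hpow : (2 : ℤ) ^ (g + 1) = 4 * 2 ^ (g - 1) := by
      have h : (2 : ℤ) ^ (g + 1) = 2 ^ ((g - 1) + 2) := by
        congr 1; omega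
      rw [h, pow_add]; ring
    have : 4 * T = 4 * (((g : ℤ) + 2) * 2 ^ (g - 1)) := by
      rw [h4T, hVval, hWval, hpow, hn]; push_cast; ring
    linarith
  -- part 3
  · have hpow : (2 : ℤ) ^ g = 2 * 2 ^ (g - 1) := by
      have h : (2 : ℤ) ^ g = 2 ^ ((g - 1) + 1) := by congr 1; omega
      rw [h, pow_succ]; ring
    rw [hpow]; ring
end

section
/- Let a₀,…,a_n be distinct elements of a field k, and let E = (e_{i,k}) be the (n+1)×(n+1) matrix whose i-th row consists of the elementary symmetric polynomials e_k evaluated on {a₀,…,a_n}∖{aᵢ} (k = 0,…,n). Then det E = ∏_{0 ≤ i < j ≤ n} (aᵢ − a_j); in particular E is invertible when the aᵢ are distinct. -/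
open Finset Equiv Equiv.Perm

lemma aux_sign_rev : ∀ (m : ℕ), Equiv.Perm.sign (Fin.revPerm : Equiv.Perm (Fin (m+1))) = (-1)^(m*(m+1)/2)
  | 0 => by
    rw [Subsingleton.elim (Fin.revPerm : Equiv.Perm (Fin 1)) 1]; simp
  | (m+1) => by
    have hdec : finRotate (m+2) * (Fin.revPerm : Equiv.Perm (Fin (m+2))) =
        Equiv.Perm.decomposeFin.symm (0, (Fin.revPerm : Equiv.Perm (Fin (m+1)))) := by
      ext x
      refine Fin.cases ?_ (fun y => ?_) x
      · simp [Fin.rev_zero, finRotate_last]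
      · simp [Equiv.Perm.decomposeFin_symm_apply_succ, Fin.rev_succ, Fin.coeSucc_eq_succ]
    have h3 : ((-1 : ℤˣ))^(m+1) * Equiv.Perm.sign (Fin.revPerm : Equiv.Perm (Fin (m+2))) = (-1)^(m*(m+1)/2) := by
      have := congrArg Equiv.Perm.sign hdec
      rwa [map_mul, sign_finRotate, Equiv.Perm.decomposeFin.symm_sign, if_pos rfl, one_mul,
        aux_sign_rev m] at this
    have h2 : (m+1)*(m+2)/2 = m*(m+1)/2 + (m+1) := by
      have h4 : (m+1)*(m+2) = m*(m+1) + 2*(m+1) := by ring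
      have h5 : m*(m+1) % 2 = 0 := Nat.even_iff.mp (Nat.even_mul_succ_self m)
      omega
    have hsq : ((-1:ℤˣ)^(m+1))*((-1:ℤˣ)^(m+1)) = 1 := by
      rw [← pow_add, ← two_mul, pow_mul]; norm_num
    calc Equiv.Perm.sign (Fin.revPerm : Equiv.Perm (Fin (m+2)))
        = ((-1:ℤˣ)^(m+1) * (-1)^(m+1)) * Equiv.Perm.sign (Fin.revPerm : Equiv.Perm (Fin (m+2))) := by
          rw [hsq, one_mul]
      _ = (-1:ℤˣ)^(m+1) * ((-1)^(m+1) * Equiv.Perm.sign (Fin.revPerm : Equiv.Perm (Fin (m+2)))) :=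
          mul_assoc _ _ _
      _ = (-1:ℤˣ)^(m+1) * (-1)^(m*(m+1)/2) := by rw [h3]
      _ = (-1)^((m+1)*(m+2)/2) := by rw [mul_comm ((-1:ℤˣ)^(m+1)), h2, pow_add, pow_one, ← pow_succ, ← pow_add]

lemma aux_key1 {k : Type*} [CommRing k] {ι : Type*} [DecidableEq ι] (s : Finset ι)
    (a : ι → k) (x : k) :
    ∑ j ∈ range (#s + 1), (∑ t ∈ s.powersetCard j, ∏ m ∈ t, a m) * x ^ (#s - j) =
      ∏ m ∈ s, (a m + x) := by
  rw [Finset.prod_add, Finset.sum_powerset]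
  refine sum_congr rfl fun j hj => ?_
  rw [Finset.sum_mul]
  refine sum_congr rfl fun t ht => ?_
  rw [mem_powersetCard] at ht
  rw [prod_const]
  congr 2
  rw [card_sdiff_of_subset ht.1, ht.2]

lemma aux_prod_filter {N : ℕ} {M : Type*} [CommMonoid M] (f : Fin N → Fin N → M) :
    ∏ p ∈ univ.filter (fun p : Fin N × Fin N => p.1 < p.2), f p.1 p.2 =
      ∏ i, ∏ j ∈ Ioi i, f i j := by
  rw [prod_filter, Fintype.prod_prod_type]
  refine prod_congr rfl fun i _ => ?_
  rw [← prod_filter]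
  congr 1
  ext j
  simp [mem_Ioi]

lemma aux_sum_card (n : ℕ) : (∑ i : Fin (n+1), #(Ioi i)) = n*(n+1)/2 := by
  have h1 : ∀ i : Fin (n+1), #(Ioi i) = n - (i : ℕ) := fun i => by
    rw [Fin.card_Ioi]; omega
  simp_rw [h1]
  rw [Fin.sum_univ_eq_sum_range (fun i => n - i)]
  have h2 := Finset.sum_range_reflect (fun i => i) (n+1)
  simp only [Nat.add_sub_cancel] at h2
  rw [h2, Finset.sum_range_id, Nat.add_sub_cancel, Nat.mul_comm]

set_option maxHeartbeats 1000000 in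
/-- for distinct `a₀,…,a_n`, the matrix `E` whose `i`-th row consists of the
elementary symmetric polynomials `e_k` of `{a₀,…,a_n} ∖ {aᵢ}` (for `k = 0,…,n`) has
determinant `∏_{i<j} (aᵢ − a_j)`; in particular `E` is invertible. -/
theorem stmt_19 {k : Type*} [Field k] (n : ℕ) (a : Fin (n + 1) → k)
    (ha : Function.Injective a) :
    Matrix.det (Matrix.of fun i j : Fin (n + 1) =>
        ∑ t ∈ (Finset.univ.erase i).powersetCard (j : ℕ), ∏ m ∈ t, a m) =
      ∏ p ∈ Finset.univ.filter (fun p : Fin (n + 1) × Fin (n + 1) => p.1 < p.2),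
        (a p.1 - a p.2) := by
  classical
  set E : Matrix (Fin (n+1)) (Fin (n+1)) k :=
    Matrix.of (fun i j : Fin (n + 1) =>
      ∑ t ∈ (Finset.univ.erase i).powersetCard (j : ℕ), ∏ m ∈ t, a m) with hE
  set M : Matrix (Fin (n+1)) (Fin (n+1)) k :=
    (Matrix.vandermonde (fun l => -a l)).transpose.submatrix (⇑Fin.revPerm) id with hM
  set P : k := ∏ i, ∏ j ∈ Ioi i, (a i - a j) with hP
  have hcard : ∀ i : Fin (n+1), #(Finset.univ.erase i) = n := fun i => by
    rw [card_erase_of_mem (mem_univ i), card_univ]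
    simp
  -- E * M is diagonal
  have hEM : E * M = Matrix.diagonal (fun i => ∏ m ∈ Finset.univ.erase i, (a m - a i)) := by
    ext i l
    rw [Matrix.mul_apply]
    have hstep : ∀ j : Fin (n+1), E i j * M j l =
        (∑ t ∈ (Finset.univ.erase i).powersetCard (j:ℕ), ∏ m ∈ t, a m) * (-a l)^(n - (j:ℕ)) := by
      intro j
      simp only [hE, hM, Matrix.submatrix_apply, Matrix.transpose_apply, Matrix.vandermonde,
        Matrix.of_apply, id]
      congr 2
      simp only [Fin.revPerm_apply]
      rw [Fin.val_rev]
      omega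
    rw [Finset.sum_congr rfl (fun j _ => hstep j),
      Fin.sum_univ_eq_sum_range (fun j => (∑ t ∈ (Finset.univ.erase i).powersetCard j, ∏ m ∈ t, a m) * (-a l)^(n - j))]
    have hk := aux_key1 (Finset.univ.erase i) a (-a l)
    rw [hcard i] at hk
    rw [hk]
    by_cases h : l = i
    · subst h
      rw [Matrix.diagonal_apply_eq]
      exact prod_congr rfl fun m _ => by ring
    · rw [Matrix.diagonal_apply_ne _ (fun hh => h hh.symm)]
      refine prod_eq_zero (mem_erase.mpr ⟨h, mem_univ l⟩) ?_
      ring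
  -- determinants
  have hdet : E.det * M.det = ∏ i, ∏ m ∈ Finset.univ.erase i, (a m - a i) := by
    rw [← Matrix.det_mul, hEM, Matrix.det_diagonal]
  have hdetM : M.det = ((Equiv.Perm.sign (Fin.revPerm : Equiv.Perm (Fin (n+1))) : ℤ) : k) * P := by
    rw [hM, Matrix.det_permute, Matrix.det_transpose, Matrix.det_vandermonde]
    congr 1
    exact prod_congr rfl fun i _ => prod_congr rfl fun j _ => by ring
  have hsign : ((Equiv.Perm.sign (Fin.revPerm : Equiv.Perm (Fin (n+1))) : ℤ) : k) = (-1)^(n*(n+1)/2) := by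
    rw [aux_sign_rev n]
    push_cast
    norm_num
  -- the diagonal product
  have hswap : (∏ i, ∏ j ∈ Iio i, (a j - a i)) = ∏ i, ∏ j ∈ Ioi i, (a i - a j) := by
    rw [prod_sigma', prod_sigma']
    refine prod_nbij' (fun p => ⟨p.2, p.1⟩) (fun p => ⟨p.2, p.1⟩) ?_ ?_ ?_ ?_ ?_ <;> simp
  have hdiag : (∏ i, ∏ m ∈ Finset.univ.erase i, (a m - a i)) = (-1)^(n*(n+1)/2) * (P * P) := by
    have hsplit : ∀ i : Fin (n+1), Finset.univ.erase i = Ioi i ∪ Iio i := fun i => by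
      ext m
      simp only [mem_erase, mem_union, mem_Ioi, mem_Iio, mem_univ, and_true]
      exact ⟨fun h => h.lt_or_gt.symm, fun h => h.elim (fun h => h.ne') (fun h => h.ne)⟩
    have hdisj : ∀ i : Fin (n+1), Disjoint (Ioi i) (Iio i) := fun i =>
      disjoint_left.mpr fun m hm hm' =>
        absurd (mem_Ioi.mp hm) (not_lt.mpr (le_of_lt (mem_Iio.mp hm')))
    calc (∏ i, ∏ m ∈ Finset.univ.erase i, (a m - a i))
        = ∏ i, ((∏ m ∈ Ioi i, (a m - a i)) * ∏ m ∈ Iio i, (a m - a i)) := by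
          refine prod_congr rfl fun i _ => ?_
          rw [hsplit i, prod_union (hdisj i)]
      _ = (∏ i, ∏ m ∈ Ioi i, (a m - a i)) * ∏ i, ∏ m ∈ Iio i, (a m - a i) := prod_mul_distrib
      _ = (∏ i, ∏ m ∈ Ioi i, (a m - a i)) * ∏ i, ∏ m ∈ Ioi i, (a i - a m) := by rw [hswap]
      _ = ∏ i, ∏ m ∈ Ioi i, ((a m - a i) * (a i - a m)) := by
          rw [← prod_mul_distrib]
          exact prod_congr rfl fun i _ => prod_mul_distrib.symm
      _ = ∏ i, ∏ m ∈ Ioi i, ((-1 : k) * ((a i - a m) * (a i - a m))) :=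
          prod_congr rfl fun i _ => prod_congr rfl fun m _ => by ring
      _ = (∏ i : Fin (n+1), ∏ m ∈ Ioi i, (-1:k)) *
            ((∏ i, ∏ m ∈ Ioi i, (a i - a m)) * ∏ i, ∏ m ∈ Ioi i, (a i - a m)) := by
          simp_rw [prod_mul_distrib]
      _ = (-1)^(n*(n+1)/2) * (P * P) := by
          rw [hP]
          congr 1
          simp_rw [prod_const]
          rw [Finset.prod_pow_eq_pow_sum, aux_sum_card]
  -- cancel
  have hPne : P ≠ 0 := by
    rw [hP]
    refine prod_ne_zero_iff.mpr fun i _ => prod_ne_zero_iff.mpr fun j hj => ?_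
    rw [mem_Ioi] at hj
    exact sub_ne_zero.mpr (fun hc => absurd (ha hc) (ne_of_lt hj))
  have hεne : ((-1:k)^(n*(n+1)/2)) ≠ 0 := pow_ne_zero _ (by norm_num)
  have hfinal : E.det * ((-1:k)^(n*(n+1)/2) * P) = P * ((-1:k)^(n*(n+1)/2) * P) := by
    have h6 : E.det * M.det = (-1)^(n*(n+1)/2) * (P*P) := by rw [hdet, hdiag]
    rw [hdetM, hsign] at h6
    rw [h6]
    ring
  have : E.det = P := mul_right_cancel₀ (mul_ne_zero hεne hPne) hfinal
  rw [this, hP, aux_prod_filter (fun i j => a i - a j)]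
end
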